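/- Let T be a positive linear functional on C²(S) with T(p) = ∫_S p(x) dx for all polynomials p of degree at most 2. Then for every f ∈ C²(S), |∫_S f(x) dx − T(f)| ≤ ‖d²f‖_∞ · ∫_S ‖x − p̄‖² dx. -/

import Mathlib

open MeasureTheory Set

noncomputable def d2normSup {n : ℕ} (S : Set (EuclideanSpace ℝ (Fin n)))
    (f : EuclideanSpace ℝ (Fin n) → ℝ) : ℝ :=
  sSup {r : ℝ | ∃ u ∈ S, ∃ v : EuclideanSpace ℝ (Fin n), ‖v‖ = 1 ∧
    r = |iteratedFDeriv ℝ 2 f u ![v, v]|}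

section Aux
variable {n : ℕ}
local notation "E" => EuclideanSpace ℝ (Fin n)

lemma aux_linear_sum (L : E →L[ℝ] ℝ) (y : E) :
    L y = ∑ i, y i * L (EuclideanSpace.single i 1) := by
  have hy : y = ∑ i, y i • EuclideanSpace.single i (1:ℝ) := by
    ext j
    have h : (∑ x : Fin n, y x • EuclideanSpace.single x (1:ℝ)) j
        = ∑ x : Fin n, (y x • EuclideanSpace.single x (1:ℝ)) j :=
      by rw [WithLp.ofLp_sum]; exact Finset.sum_apply j Finset.univ _
    rw [h]
    simp [EuclideanSpace.single_apply]
  conv_lhs => rw [hy]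
  simp [smul_eq_mul]

lemma aux_taylor {f : E → ℝ} (hf : ContDiff ℝ 2 f) (a x : E) {M : ℝ}
    (hM : ∀ t ∈ Set.Icc (0:ℝ) 1,
      |iteratedFDeriv ℝ 2 f (a + t • (x - a)) ![x - a, x - a]| ≤ M) :
    |f x - f a - fderiv ℝ f a (x - a)| ≤ M / 2 := by
  set w := x - a with hw
  set γ : ℝ → E := fun t => a + t • w with hγdef
  have hγ : ∀ t : ℝ, HasDerivAt γ w t := by
    intro t
    have : HasDerivAt (fun s : ℝ => s • w) ((1:ℝ) • w) t :=
      (hasDerivAt_id t).smul_const w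
    have h := this.const_add a
    rw [one_smul] at h
    exact h
  have hγc : ContDiff ℝ 2 γ := contDiff_const.add (contDiff_id.smul contDiff_const)
  have hfd : Differentiable ℝ f := hf.differentiable two_ne_zero
  have hfd2 : Differentiable ℝ (fderiv ℝ f) :=
    (hf.fderiv_right (by norm_num : (1:WithTop ℕ∞)+1 ≤ 2)).differentiable one_ne_zero
  set φ : ℝ → ℝ := fun s => f (γ s) with hφdef
  have h1 : ∀ t : ℝ, HasDerivAt φ (fderiv ℝ f (γ t) w) t := fun t =>
    ((hfd (γ t)).hasFDerivAt).comp_hasDerivAt t (hγ t)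
  have h2 : ∀ t : ℝ, HasDerivAt (fun s => fderiv ℝ f (γ s) w)
      (fderiv ℝ (fderiv ℝ f) (γ t) w w) t := by
    intro t
    have hcomp : HasDerivAt (fun s => fderiv ℝ f (γ s))
        (fderiv ℝ (fderiv ℝ f) (γ t) w) t :=
      ((hfd2 (γ t)).hasFDerivAt).comp_hasDerivAt t (hγ t)
    exact (ContinuousLinearMap.apply ℝ ℝ w).hasFDerivAt.comp_hasDerivAt t hcomp
  have hU : UniqueDiffOn ℝ (Icc (0:ℝ) 1) := uniqueDiffOn_Icc one_pos
  have heq : ∀ y ∈ Icc (0:ℝ) 1,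
      iteratedDerivWithin 1 φ (Icc 0 1) y = fderiv ℝ f (γ y) w := by
    intro y hy
    rw [iteratedDerivWithin_one]
    exact (h1 y).hasDerivWithinAt.derivWithin (hU y hy)
  have hφc : ContDiffOn ℝ 1 φ (Icc (0:ℝ) 1) :=
    ((hf.comp hγc).of_le one_le_two).contDiffOn
  have hdiff : DifferentiableOn ℝ (iteratedDerivWithin 1 φ (Icc 0 1)) (Ioo (0:ℝ) 1) := by
    have hψ : DifferentiableOn ℝ (fun s => fderiv ℝ f (γ s) w) (Ioo (0:ℝ) 1) :=
      fun y _ => (h2 y).differentiableAt.differentiableWithinAt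
    exact hψ.congr (fun y hy => heq y (Ioo_subset_Icc_self hy))
  obtain ⟨ξ, hξ, hrem⟩ := taylor_mean_remainder_lagrange (n := 1) (x₀ := 0) (x := 1) zero_ne_one
    (by rw [uIcc_of_le zero_le_one]; exact_mod_cast hφc)
    (by rw [uIcc_of_le zero_le_one, uIoo_of_le zero_le_one]; exact_mod_cast hdiff)
  rw [uIcc_of_le zero_le_one] at hrem
  rw [uIoo_of_le zero_le_one] at hξ
  have hξ' : ξ ∈ Icc (0:ℝ) 1 := Ioo_subset_Icc_self hξ
  have h2nd : iteratedDerivWithin 2 φ (Icc 0 1) ξ =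
      iteratedFDeriv ℝ 2 f (γ ξ) ![w, w] := by
    have hstep : iteratedDerivWithin 2 φ (Icc 0 1) ξ =
        derivWithin (iteratedDerivWithin 1 φ (Icc 0 1)) (Icc 0 1) ξ :=
      by rw [iteratedDerivWithin_succ]
    rw [hstep]
    have : derivWithin (iteratedDerivWithin 1 φ (Icc 0 1)) (Icc 0 1) ξ
        = derivWithin (fun s => fderiv ℝ f (γ s) w) (Icc 0 1) ξ :=
      derivWithin_congr heq (heq ξ hξ')
    rw [this, (h2 ξ).hasDerivWithinAt.derivWithin (hU ξ hξ')]
    rw [iteratedFDeriv_two_apply]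
    simp
  have htay : taylorWithinEval φ 1 (Icc (0:ℝ) 1) 0 1 = φ 0 + fderiv ℝ f a w := by
    rw [show (1:ℕ) = 0 + 1 from rfl, taylorWithinEval_succ, taylor_within_zero_eval]
    have h0 : iteratedDerivWithin 1 φ (Icc 0 1) 0 = fderiv ℝ f (γ 0) w :=
      heq 0 (by norm_num)
    have hγ0 : γ 0 = a := by simp [hγdef]
    rw [h0, hγ0]
    norm_num
  have hφ1 : φ 1 = f x := by simp [hφdef, hγdef, hw]
  have hφ0 : φ 0 = f a := by simp [hφdef, hγdef]
  rw [htay, hφ1, hφ0] at hrem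
  have : f x - f a - fderiv ℝ f a w =
      iteratedFDeriv ℝ 2 f (γ ξ) ![w, w] / 2 := by
    rw [← h2nd]
    rw [show f x - f a - (fderiv ℝ f) a w = f x - (f a + (fderiv ℝ f) a w) by ring, hrem]
    norm_num
  rw [this, abs_div]
  have := hM ξ hξ'
  simp only [abs_two]
  linarith [abs_nonneg (iteratedFDeriv ℝ 2 f (γ ξ) ![w, w])]

lemma aux_M_nonneg (S : Set E) (f : E → ℝ) : 0 ≤ d2normSup S f :=
  Real.sSup_nonneg (by rintro r ⟨u, hu, v, hv, rfl⟩; exact abs_nonneg _)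

lemma aux_bddAbove {S : Set E} (hSc : IsCompact S) {f : E → ℝ} (hf : ContDiff ℝ 2 f) :
    BddAbove {r : ℝ | ∃ u ∈ S, ∃ v : E, ‖v‖ = 1 ∧
      r = |iteratedFDeriv ℝ 2 f u ![v, v]|} := by
  have hcont : ContinuousOn (fun u : E => iteratedFDeriv ℝ 2 f u) S :=
    (hf.continuous_iteratedFDeriv (by norm_num)).continuousOn
  obtain ⟨C, hC⟩ := hSc.exists_bound_of_continuousOn hcont
  refine ⟨C, ?_⟩
  rintro r ⟨u, hu, v, hv, rfl⟩
  calc |iteratedFDeriv ℝ 2 f u ![v, v]|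
      ≤ ‖iteratedFDeriv ℝ 2 f u‖ * ∏ i : Fin 2, ‖(![v, v]) i‖ :=
        (iteratedFDeriv ℝ 2 f u).le_opNorm ![v, v]
    _ ≤ C := by
        rw [Fin.prod_univ_two]
        simp only [Matrix.cons_val_zero, Matrix.cons_val_one, Matrix.head_cons, hv]
        simpa using hC u hu

lemma aux_le_M {S : Set E} (hSc : IsCompact S) {f : E → ℝ} (hf : ContDiff ℝ 2 f)
    {u : E} (hu : u ∈ S) (w : E) :
    |iteratedFDeriv ℝ 2 f u ![w, w]| ≤ d2normSup S f * ‖w‖ ^ 2 := by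
  rcases eq_or_ne w 0 with rfl | hw
  · have h0 : iteratedFDeriv ℝ 2 f u ![(0:E), 0] = 0 :=
      (iteratedFDeriv ℝ 2 f u).map_coord_zero 0 rfl
    simp [h0]
  · have hwn : ‖w‖ ≠ 0 := norm_ne_zero_iff.2 hw
    set v : E := ‖w‖⁻¹ • w with hvdef
    have hv : ‖v‖ = 1 := by
      rw [hvdef, norm_smul, norm_inv, norm_norm, inv_mul_cancel₀ hwn]
    have key : ![w, w] = fun i => ‖w‖ • (![v, v] i) := by
      funext i
      fin_cases i <;>
        simp [hvdef, smul_smul, mul_inv_cancel₀ hwn]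
    have hmap : iteratedFDeriv ℝ 2 f u ![w, w]
        = (∏ _i : Fin 2, ‖w‖) • iteratedFDeriv ℝ 2 f u ![v, v] := by
      rw [key]
      exact (iteratedFDeriv ℝ 2 f u).map_smul_univ (fun _ => ‖w‖) ![v, v]
    have hmem : |iteratedFDeriv ℝ 2 f u ![v, v]| ∈ {r : ℝ | ∃ u ∈ S, ∃ v : E, ‖v‖ = 1 ∧
        r = |iteratedFDeriv ℝ 2 f u ![v, v]|} := ⟨u, hu, v, hv, rfl⟩
    have hle : |iteratedFDeriv ℝ 2 f u ![v, v]| ≤ d2normSup S f :=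
      le_csSup (aux_bddAbove hSc hf) hmem
    rw [hmap]
    rw [Fin.prod_univ_two, smul_eq_mul, abs_mul, abs_mul, abs_norm]
    calc ‖w‖ * ‖w‖ * |iteratedFDeriv ℝ 2 f u ![v, v]|
        ≤ ‖w‖ * ‖w‖ * d2normSup S f := by
          gcongr
      _ = d2normSup S f * ‖w‖ ^ 2 := by ring

lemma aux_poly (c : ℝ) (D : Fin n → ℝ) (a : Fin n → ℝ) (e : ℝ) :
    ∃ q : MvPolynomial (Fin n) ℝ, q.totalDegree ≤ 2 ∧
      ∀ x : EuclideanSpace ℝ (Fin n), MvPolynomial.eval (fun i => x i) q =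
        c + (∑ i, D i * (x i - a i)) + e * ∑ i, (x i - a i) ^ 2 := by
  classical
  refine ⟨MvPolynomial.C c + (∑ i, MvPolynomial.C (D i) *
      (MvPolynomial.X i - MvPolynomial.C (a i))) +
      MvPolynomial.C e * ∑ i, (MvPolynomial.X i - MvPolynomial.C (a i)) ^ 2, ?_, ?_⟩
  · have h1 : ∀ i, (MvPolynomial.X i - MvPolynomial.C (a i) :
        MvPolynomial (Fin n) ℝ).totalDegree ≤ 1 := by
      intro i
      rw [sub_eq_add_neg, ← MvPolynomial.C_neg]
      refine le_trans (MvPolynomial.totalDegree_add _ _) ?_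
      simp [MvPolynomial.totalDegree_X, MvPolynomial.totalDegree_C]
    refine le_trans (MvPolynomial.totalDegree_add _ _) (max_le ?_ ?_)
    · refine le_trans (MvPolynomial.totalDegree_add _ _)
        (max_le (by simp [MvPolynomial.totalDegree_C]) ?_)
      refine le_trans (MvPolynomial.totalDegree_finset_sum _ _) ?_
      refine Finset.sup_le fun i _ => ?_
      refine le_trans (MvPolynomial.totalDegree_mul _ _) ?_
      simpa [MvPolynomial.totalDegree_C] using le_trans (h1 i) one_le_two
    · refine le_trans (MvPolynomial.totalDegree_mul _ _) ?_
      simp only [MvPolynomial.totalDegree_C, zero_add]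
      refine le_trans (MvPolynomial.totalDegree_finset_sum _ _) ?_
      refine Finset.sup_le fun i _ => ?_
      refine le_trans (MvPolynomial.totalDegree_pow _ _) ?_
      calc 2 * (MvPolynomial.X i - MvPolynomial.C (a i) :
            MvPolynomial (Fin n) ℝ).totalDegree ≤ 2 * 1 :=
            Nat.mul_le_mul_left 2 (h1 i)
        _ = 2 := rfl
  · intro x
    simp

end Aux

theorem cubature_error_bound {n : ℕ}
    (p : Fin (n + 1) → EuclideanSpace ℝ (Fin n)) (hp : AffineIndependent ℝ p)
    (S : Set (EuclideanSpace ℝ (Fin n))) (hS : S = convexHull ℝ (Set.range p))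
    (pbar : EuclideanSpace ℝ (Fin n)) (hpbar : pbar = ((n : ℝ) + 1)⁻¹ • ∑ i, p i)
    (T : (EuclideanSpace ℝ (Fin n) → ℝ) → ℝ)
    (Tadd : ∀ f g : EuclideanSpace ℝ (Fin n) → ℝ, ContDiff ℝ 2 f → ContDiff ℝ 2 g →
      T (f + g) = T f + T g)
    (Tsmul : ∀ (c : ℝ) (f : EuclideanSpace ℝ (Fin n) → ℝ), ContDiff ℝ 2 f →
      T (c • f) = c * T f)
    (Tpos : ∀ f g : EuclideanSpace ℝ (Fin n) → ℝ, ContDiff ℝ 2 f → ContDiff ℝ 2 g →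
      (∀ x ∈ S, f x ≤ g x) → T f ≤ T g)
    (Tpoly : ∀ q : MvPolynomial (Fin n) ℝ, q.totalDegree ≤ 2 →
      T (fun x => MvPolynomial.eval (fun i => x i) q) =
        ∫ x in S, MvPolynomial.eval (fun i => x i) q)
    (f : EuclideanSpace ℝ (Fin n) → ℝ) (hf : ContDiff ℝ 2 f) :
    |(∫ x in S, f x) - T f| ≤ d2normSup S f * ∫ x in S, ‖x - pbar‖ ^ 2 := by
  set M := d2normSup S f with hMdef
  have hM0 : 0 ≤ M := aux_M_nonneg S f
  have hSc : IsCompact S := hS ▸ (Set.finite_range p).isCompact_convexHull ℝ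
  have hconv : Convex ℝ S := hS ▸ convex_convexHull ℝ _
  have hSm : MeasurableSet S := hSc.isClosed.measurableSet
  -- pbar ∈ S
  have hpbarS : pbar ∈ S := by
    rw [hS, hpbar]
    have hmem := Finset.centerMass_mem_convexHull (Finset.univ : Finset (Fin (n+1)))
      (w := fun _ => (1:ℝ)) (z := p) (fun i _ => zero_le_one)
      (by simp; positivity) (fun i _ => Set.mem_range_self i)
    have : (Finset.univ : Finset (Fin (n+1))).centerMass (fun _ => (1:ℝ)) p
        = ((n : ℝ) + 1)⁻¹ • ∑ i, p i := by
      simp [Finset.centerMass]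
    rwa [this] at hmem
  -- coordinate functions
  have hco : ∀ i : Fin n, ContDiff ℝ 2 (fun x : EuclideanSpace ℝ (Fin n) => x i) := fun i =>
    (EuclideanSpace.proj i : EuclideanSpace ℝ (Fin n) →L[ℝ] ℝ).contDiff
  set D : Fin n → ℝ := fun i => fderiv ℝ f pbar (EuclideanSpace.single i 1) with hD
  have hsub : ∀ (x : EuclideanSpace ℝ (Fin n)) (i : Fin n), (x - pbar) i = x i - pbar i := fun x i => rfl
  have hfd_sum : ∀ x : EuclideanSpace ℝ (Fin n), fderiv ℝ f pbar (x - pbar) = ∑ i, D i * (x i - pbar i) := by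
    intro x
    rw [aux_linear_sum (fderiv ℝ f pbar) (x - pbar)]
    exact Finset.sum_congr rfl fun i _ => by rw [hsub]; ring
  have hr_eq : ∀ x : EuclideanSpace ℝ (Fin n), ∑ i, (x i - pbar i) ^ 2 = ‖x - pbar‖ ^ 2 := by
    intro x
    rw [EuclideanSpace.norm_eq, Real.sq_sqrt (by positivity)]
    exact Finset.sum_congr rfl fun i _ => by rw [hsub]; simp [sq_abs]
  -- Taylor sandwich
  have key : ∀ x ∈ S, |f x - (f pbar + ∑ i, D i * (x i - pbar i))|
      ≤ M / 2 * ∑ i, (x i - pbar i) ^ 2 := by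
    intro x hx
    have hseg : ∀ t ∈ Icc (0:ℝ) 1, pbar + t • (x - pbar) ∈ S := fun t ht =>
      hconv.add_smul_sub_mem hpbarS hx ht
    have hb : ∀ t ∈ Icc (0:ℝ) 1,
        |iteratedFDeriv ℝ 2 f (pbar + t • (x - pbar)) ![x - pbar, x - pbar]|
          ≤ M * ‖x - pbar‖ ^ 2 := fun t ht => aux_le_M hSc hf (hseg t ht) _
    have := aux_taylor hf pbar x hb
    rw [hfd_sum x] at this
    rw [hr_eq x]
    calc |f x - (f pbar + ∑ i, D i * (x i - pbar i))|
        = |f x - f pbar - ∑ i, D i * (x i - pbar i)| := by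
          congr 1; ring
      _ ≤ M * ‖x - pbar‖ ^ 2 / 2 := this
      _ = M / 2 * ‖x - pbar‖ ^ 2 := by ring
  -- the quadratic comparison functions
  set lin : EuclideanSpace ℝ (Fin n) → ℝ := fun x => f pbar + ∑ i, D i * (x i - pbar i) with hlin
  set rr : EuclideanSpace ℝ (Fin n) → ℝ := fun x => ∑ i, (x i - pbar i) ^ 2 with hrr
  have hlinc : Continuous lin :=
    continuous_const.add (continuous_finset_sum _ fun i _ =>
      continuous_const.mul (((hco i).continuous).sub continuous_const))
  have hrrc : Continuous rr :=
    continuous_finset_sum _ fun i _ =>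
      (((hco i).continuous).sub continuous_const).pow 2
  have hcd : ∀ e : ℝ, ContDiff ℝ 2 (fun x : EuclideanSpace ℝ (Fin n) => lin x + e * rr x) := by
    intro e
    refine ContDiff.add ?_ (contDiff_const.mul ?_)
    · exact contDiff_const.add (ContDiff.sum fun i _ =>
        contDiff_const.mul ((hco i).sub contDiff_const))
    · exact ContDiff.sum fun i _ => ((hco i).sub contDiff_const).pow 2
  -- T on the quadratics equals the integral
  have hTq : ∀ e : ℝ, T (fun x => lin x + e * rr x) = ∫ x in S, (lin x + e * rr x) := by
    intro e
    obtain ⟨q, hqdeg, hqev⟩ := aux_poly (f pbar) D (fun i => pbar i) e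
    have hfun : (fun x : EuclideanSpace ℝ (Fin n) => MvPolynomial.eval (fun i => x i) q)
        = fun x => lin x + e * rr x := funext fun x => hqev x
    have := Tpoly q hqdeg
    rwa [hfun] at this
  -- integrability
  have hfint : IntegrableOn f S := hf.continuous.continuousOn.integrableOn_compact hSc
  have hlinint : IntegrableOn lin S := hlinc.continuousOn.integrableOn_compact hSc
  have hrrint : IntegrableOn rr S := hrrc.continuousOn.integrableOn_compact hSc
  have hqint : ∀ e : ℝ, IntegrableOn (fun x => lin x + e * rr x) S := fun e =>
    hlinint.add ((hrrint.const_mul e))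
  -- set-integral splitting
  have hsplit : ∀ e : ℝ, ∫ x in S, (lin x + e * rr x)
      = (∫ x in S, lin x) + e * ∫ x in S, rr x := by
    intro e
    rw [integral_add hlinint (hrrint.const_mul e), integral_const_mul]
  -- sandwich for T f
  have hTub : T f ≤ (∫ x in S, lin x) + M / 2 * ∫ x in S, rr x := by
    have h1 : T f ≤ T (fun x => lin x + (M/2) * rr x) := by
      refine Tpos f _ hf (hcd _) fun x hx => ?_
      have := key x hx
      have h2 := (abs_le.mp this).1
      simp only [hlin, hrr]
      linarith [(abs_le.mp (key x hx)).2]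
    calc T f ≤ T (fun x => lin x + (M/2) * rr x) := h1
      _ = ∫ x in S, (lin x + (M/2) * rr x) := hTq _
      _ = (∫ x in S, lin x) + M / 2 * ∫ x in S, rr x := hsplit _
  have hTlb : (∫ x in S, lin x) - M / 2 * ∫ x in S, rr x ≤ T f := by
    have h1 : T (fun x => lin x + (-(M/2)) * rr x) ≤ T f := by
      refine Tpos _ f (hcd _) hf fun x hx => ?_
      simp only [hlin, hrr]
      linarith [(abs_le.mp (key x hx)).1]
    have h2 := (hTq (-(M/2))).symm ▸ h1
    rw [hTq _, hsplit _] at h1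
    linarith
  -- sandwich for the integral
  have hIub : (∫ x in S, f x) ≤ (∫ x in S, lin x) + M / 2 * ∫ x in S, rr x := by
    have : (∫ x in S, f x) ≤ ∫ x in S, (lin x + (M/2) * rr x) := by
      refine setIntegral_mono_on hfint (hqint _) hSm fun x hx => ?_
      simp only [hlin, hrr]
      linarith [(abs_le.mp (key x hx)).2]
    rwa [hsplit] at this
  have hIlb : (∫ x in S, lin x) - M / 2 * ∫ x in S, rr x ≤ ∫ x in S, f x := by
    have : (∫ x in S, (lin x + (-(M/2)) * rr x)) ≤ ∫ x in S, f x := by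
      refine setIntegral_mono_on (hqint _) hfint hSm fun x hx => ?_
      simp only [hlin, hrr]
      linarith [(abs_le.mp (key x hx)).1]
    rw [hsplit] at this
    linarith
  -- conclude
  have hrrI : (∫ x in S, rr x) = ∫ x in S, ‖x - pbar‖ ^ 2 := by
    refine integral_congr_ae (Filter.Eventually.of_forall fun x => ?_)
    exact hr_eq x
  rw [hrrI] at hTub hTlb hIub hIlb
  rw [abs_le]
  constructor <;> [linarith; linarith]
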